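/- Let ε ≥ 0, γ ≥ 0, and let (h,α,ϑ) be a minimizer of C in 𝓐. If max_{i=1,…,n}|h_i| < c_p^{-2} = π²/4, then (h,α,ϑ) is a regular point of 𝓐, i.e. the Fréchet differential DG(h,α,ϑ) : 𝓗 → (H^1_{0L}(I)ⁿ)' is surjective. -/

import Mathlib

open MeasureTheory Set

noncomputable def edot (p q : ℝ × ℝ) : ℝ := p.1 * q.1 + p.2 * q.2
noncomputable def enorm2 (p : ℝ × ℝ) : ℝ := Real.sqrt (p.1 ^ 2 + p.2 ^ 2)
noncomputable def Dmvec (v : ℝ) : ℝ × ℝ := (-Real.sin v, Real.cos v)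
noncomputable def D2mvec (v : ℝ) : ℝ × ℝ := (-Real.cos v, -Real.sin v)

noncomputable def mu01 : Measure ℝ := volume.restrict (Ioo 0 1)

/-- `H^1_{0L}(I)` modelled isometrically by the `L²(I)` space of derivatives. -/
noncomputable abbrev E := Lp ℝ 2 mu01

noncomputable def U (g : E) : ℝ → ℝ := fun t => ∫ s in Ioc 0 t, (g : ℝ → ℝ) s ∂mu01

/-- The admissible space `𝓗 = ℝ^{2n} × H^1_{0L}(I) × H^1_{0L}(I)ⁿ`. -/
noncomputable abbrev Hn (n : ℕ) := (Fin n → ℝ × ℝ) × E × (Fin n → E)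

/-- Weak solution of the state equation. -/
def IsStateSol (p : ℝ × ℝ) (a g : E) : Prop :=
  ∀ w : E, (∫ s, (g : ℝ → ℝ) s * (w : ℝ → ℝ) s ∂mu01)
    - (∫ s, edot p (Dmvec (U a s + U g s)) * U w s ∂mu01) = 0

/-- The admissible set `𝓐`. -/
def Admissible {n : ℕ} (x : Hn n) : Prop := ∀ i, IsStateSol (x.1 i) x.2.1 (x.2.2 i)

/-- The cost functional. -/
noncomputable def cost {n : ℕ} (tb : Fin n → ℝ → ℝ) (ε γ : ℝ) (x : Hn n) : ℝ :=
  (1 / 2) * ∑ i, (∫ s, (U (x.2.2 i) s - tb i s) ^ 2 ∂mu01)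
    + (ε / 2) * (∫ s, ((x.2.1 : ℝ → ℝ) s) ^ 2 ∂mu01)
    + (γ / 2) * ∑ i, (enorm2 (x.1 i)) ^ 2

/-- `⟨DG(h,α,ϑ)(k,β,ι), u⟩`, the Fréchet differential of the constraint mapping. -/
noncomputable def dgFormula {n : ℕ} (x y : Hn n) (u : Fin n → E) : ℝ :=
  ∑ i, (-(∫ s, edot (y.1 i) (Dmvec (U x.2.1 s + U (x.2.2 i) s)) * U (u i) s ∂mu01))
    + ∑ i, ((∫ s, (y.2.2 i : ℝ → ℝ) s * (u i : ℝ → ℝ) s ∂mu01)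
      - ∫ s, edot (x.1 i) (D2mvec (U x.2.1 s + U (x.2.2 i) s))
          * (U (y.2.2 i) s + U y.2.1 s) * U (u i) s ∂mu01)

/-! ### Auxiliary development -/

section Aux

open ENNReal

lemma mu01_def : mu01 = volume.restrict (Ioo 0 1) := rfl

instance mu01_isProb : IsProbabilityMeasure mu01 :=
  ⟨by simp [mu01_def, Real.volume_Ioo]⟩

instance mu01_noAtoms : NullSingletonClass mu01 := by
  rw [mu01_def]; infer_instance

lemma integrable_of_E (w : E) : Integrable (w : ℝ → ℝ) mu01 :=
  (Lp.memLp w).integrable one_le_two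

lemma integrable_of_continuous (f : ℝ → ℝ) (hf : Continuous f) : Integrable f mu01 := by
  have : IntegrableOn f (Ioo 0 1) volume :=
    (hf.integrableOn_Icc (a := 0) (b := 1)).mono_set Ioo_subset_Icc_self
  exact this

lemma U_eq_intervalIntegral (w : E) (t : ℝ) :
    U w t = ∫ x in (0:ℝ)..t, (w : ℝ → ℝ) x ∂mu01 := by
  rcases le_or_gt 0 t with h | h
  · rw [intervalIntegral.integral_of_le h]; rfl
  · rw [intervalIntegral.integral_of_ge h.le, U]
    have h1 : Ioc (0:ℝ) t = (∅ : Set ℝ) := Ioc_eq_empty (by linarith)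
    have h2 : (∫ s in Ioc t 0, (w : ℝ → ℝ) s ∂mu01) = 0 := by
      have hm : mu01 (Ioc t 0) = 0 := by
        rw [mu01_def, Measure.restrict_apply measurableSet_Ioc]
        have : Ioc t 0 ∩ Ioo 0 1 = (∅ : Set ℝ) := by
          ext s
          simp only [mem_inter_iff, mem_Ioc, mem_Ioo, mem_empty_iff_false, iff_false, not_and]
          rintro ⟨_, h2⟩ h3
          linarith
        simp [this]
      have hz : mu01.restrict (Ioc t 0) = 0 := Measure.restrict_eq_zero.2 hm
      rw [hz, integral_zero_measure]
    simp [h1, h2]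

lemma continuous_U (w : E) : Continuous (U w) := by
  have h : U w = fun t => ∫ x in (0:ℝ)..t, (w : ℝ → ℝ) x ∂mu01 :=
    funext (U_eq_intervalIntegral w)
  rw [h]
  exact intervalIntegral.continuous_primitive
    (fun a b => (integrable_of_E w).intervalIntegrable) 0

lemma U_abs_le (w : E) (t : ℝ) : |U w t| ≤ ‖w‖ := by
  have hs : MeasurableSet (Ioc (0:ℝ) t) := measurableSet_Ioc
  have hμ : mu01 (Ioc (0:ℝ) t) ≠ ∞ := (measure_lt_top mu01 _).ne
  have h1 : (inner ℝ (indicatorConstLp 2 hs hμ (1:ℝ)) w : ℝ) = U w t :=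
    L2.inner_indicatorConstLp_one hs hμ w
  have h2 : |(inner ℝ (indicatorConstLp 2 hs hμ (1:ℝ)) w : ℝ)|
      ≤ ‖indicatorConstLp 2 hs hμ (1:ℝ)‖ * ‖w‖ := abs_real_inner_le_norm _ _
  have h3 : ‖indicatorConstLp (E := ℝ) 2 hs hμ (1:ℝ)‖ ≤ 1 := by
    rw [norm_indicatorConstLp two_ne_zero ENNReal.ofNat_ne_top]
    have hm : (mu01 (Ioc (0:ℝ) t)).toReal ≤ 1 := by
      have := prob_le_one (μ := mu01) (s := Ioc (0:ℝ) t)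
      simpa using ENNReal.toReal_mono ENNReal.one_ne_top this
    calc ‖(1:ℝ)‖ * (mu01 (Ioc (0:ℝ) t)).toReal ^ (1 / (2:ℝ≥0∞).toReal)
        = (mu01 (Ioc (0:ℝ) t)).toReal ^ (1 / (2:ℝ≥0∞).toReal) := by simp
      _ ≤ 1 := Real.rpow_le_one ENNReal.toReal_nonneg hm (by norm_num)
  calc |U w t| = |(inner ℝ (indicatorConstLp 2 hs hμ (1:ℝ)) w : ℝ)| := by rw [h1]
    _ ≤ ‖indicatorConstLp (E := ℝ) 2 hs hμ (1:ℝ)‖ * ‖w‖ := h2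
    _ ≤ 1 * ‖w‖ := by
        have : (0:ℝ) ≤ ‖w‖ := norm_nonneg _
        exact mul_le_mul_of_nonneg_right h3 this
    _ = ‖w‖ := one_mul _

lemma U_zero : U (0 : E) = fun _ => 0 := by
  funext t
  have h : ((0 : E) : ℝ → ℝ) =ᵐ[mu01] 0 := Lp.coeFn_zero ℝ 2 mu01
  rw [U]
  rw [integral_congr_ae (ae_restrict_of_ae h)]
  simp

lemma U_add (a b : E) (t : ℝ) : U (a + b) t = U a t + U b t := by
  have h : ((a + b : E) : ℝ → ℝ) =ᵐ[mu01] fun s => (a : ℝ → ℝ) s + (b : ℝ → ℝ) s :=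
    Lp.coeFn_add a b
  rw [U, U, U, integral_congr_ae (ae_restrict_of_ae h)]
  exact integral_add ((integrable_of_E a).restrict) ((integrable_of_E b).restrict)

lemma U_smul (r : ℝ) (a : E) (t : ℝ) : U (r • a) t = r * U a t := by
  have h : ((r • a : E) : ℝ → ℝ) =ᵐ[mu01] fun s => r * (a : ℝ → ℝ) s := by
    filter_upwards [Lp.coeFn_smul r a] with s hs
    simpa using hs
  rw [U, U, integral_congr_ae (ae_restrict_of_ae h), integral_const_mul]

lemma integral_mul_eq_inner (a b : E) :
    (∫ s, (a : ℝ → ℝ) s * (b : ℝ → ℝ) s ∂mu01) = (inner ℝ a b : ℝ) := by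
  rw [L2.inner_def]
  refine integral_congr_ae (Filter.Eventually.of_forall fun s => ?_)
  simp [RCLike.inner_apply, mul_comm]

lemma integrable_mul_of_E (a b : E) :
    Integrable (fun s => (a : ℝ → ℝ) s * (b : ℝ → ℝ) s) mu01 := by
  have := L2.integrable_inner (𝕜 := ℝ) a b
  simp [RCLike.inner_apply] at this
  simpa only [mul_comm] using this

end Aux

/-! ### The sharp Poincaré inequality via a Schur test -/

section Poincare

open ENNReal Real

lemma poincare_lintegral (w : ℝ → ℝ) (hw : Measurable w) (hwi : Integrable w mu01) :
    (∫⁻ t, ENNReal.ofReal ((∫ s in Ioc 0 t, w s ∂mu01) ^ 2) ∂mu01)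
      ≤ ENNReal.ofReal (4 / Real.pi ^ 2) * ∫⁻ s, ENNReal.ofReal (w s ^ 2) ∂mu01 := by
  have hπ : (0:ℝ) < Real.pi := Real.pi_pos
  set P : ℝ → ℝ≥0∞ := fun s => ENNReal.ofReal (Real.cos (Real.pi / 2 * s)) with hP
  set W : ℝ → ℝ≥0∞ := fun s => ENNReal.ofReal (w s ^ 2) with hW
  set Q : ℝ → ℝ≥0∞ := fun t => ENNReal.ofReal (2 / Real.pi * Real.sin (Real.pi / 2 * t)) with hQ
  set K : ℝ × ℝ → ℝ≥0∞ := fun z => if z.2 ≤ z.1 then Q z.1 * (W z.2 / P z.2) else 0 with hK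
  -- basic positivity
  have hcos_pos : ∀ s : ℝ, 0 < s → s < 1 → 0 < Real.cos (Real.pi / 2 * s) := by
    intro s h0 h1
    apply Real.cos_pos_of_mem_Ioo
    constructor
    · nlinarith
    · nlinarith
  -- measurability
  have measP : Measurable P := (Real.continuous_cos.comp (continuous_const.mul continuous_id)).measurable.ennreal_ofReal
  have measW : Measurable W := ((hw.pow_const 2).ennreal_ofReal)
  have measQ : Measurable Q :=
    (continuous_const.mul (Real.continuous_sin.comp (continuous_const.mul continuous_id))).measurable.ennreal_ofReal
  have measWP : Measurable fun s => W s / P s := measW.div measP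
  have measK : Measurable K := by
    apply Measurable.ite (measurableSet_le measurable_snd measurable_fst)
    · exact (measQ.comp measurable_fst).mul (measWP.comp measurable_snd)
    · exact measurable_const
  -- Step 1: Cauchy-Schwarz
  have step1 : ∀ t ∈ Ioo (0:ℝ) 1,
      ENNReal.ofReal ((∫ s in Ioc 0 t, w s ∂mu01) ^ 2)
        ≤ (∫⁻ s in Ioc 0 t, P s ∂mu01) * (∫⁻ s in Ioc 0 t, W s / P s ∂mu01) := by
    intro t ht
    set μt := mu01.restrict (Ioc 0 t) with hμt
    have hmem : ∀ᵐ s ∂μt, s ∈ Ioc (0:ℝ) t := ae_restrict_mem measurableSet_Ioc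
    have key : (fun s => ENNReal.ofReal |w s|)
        =ᵐ[μt] ((fun s => P s ^ ((1:ℝ)/2)) * fun s => (W s / P s) ^ ((1:ℝ)/2)) := by
      filter_upwards [hmem] with s hs
      have hc : 0 < Real.cos (Real.pi / 2 * s) := hcos_pos s hs.1 (lt_of_le_of_lt hs.2 ht.2)
      have hP0 : P s ≠ 0 := (ENNReal.ofReal_pos.2 hc).ne'
      have hPt : P s ≠ ∞ := ofReal_ne_top
      have hWs : W s = ENNReal.ofReal |w s| ^ (2:ℕ) := by
        simp only [hW]
        rw [← sq_abs (w s), ENNReal.ofReal_pow (abs_nonneg _)]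
      set b := ENNReal.ofReal |w s| with hb
      have hb_ne_top : b ≠ ∞ := ofReal_ne_top
      simp only [Pi.mul_apply]
      rw [hWs, ENNReal.div_rpow_of_nonneg _ _ (by norm_num : (0:ℝ) ≤ 1/2)]
      have h1 : (b ^ (2:ℕ)) ^ ((1:ℝ)/2) = b := by
        rw [← ENNReal.rpow_natCast b 2, ← ENNReal.rpow_mul]
        norm_num
      rw [h1]
      have hP12_0 : P s ^ ((1:ℝ)/2) ≠ 0 :=
        (ENNReal.rpow_pos (lt_of_le_of_ne zero_le (Ne.symm hP0)) hPt).ne'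
      have hP12_t : P s ^ ((1:ℝ)/2) ≠ ∞ :=
        ENNReal.rpow_ne_top_of_nonneg (by norm_num) hPt
      rw [ENNReal.mul_div_cancel hP12_0 hP12_t]
    have habs : ENNReal.ofReal (∫ s in Ioc 0 t, |w s| ∂mu01)
        = ∫⁻ s, ENNReal.ofReal |w s| ∂μt := by
      exact ofReal_integral_eq_lintegral_ofReal (hwi.restrict.abs)
        (Filter.Eventually.of_forall fun s => abs_nonneg _)
    have hconj : Real.HolderConjugate 2 2 := Real.HolderConjugate.two_two
    have CS := ENNReal.lintegral_mul_le_Lp_mul_Lq μt hconj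
      (f := fun s => P s ^ ((1:ℝ)/2)) (g := fun s => (W s / P s) ^ ((1:ℝ)/2))
      ((ENNReal.continuous_rpow_const.measurable.comp measP).aemeasurable)
      ((ENNReal.continuous_rpow_const.measurable.comp measWP).aemeasurable)
    have hsimp1 : (∫⁻ s, ((fun s => P s ^ ((1:ℝ)/2)) s) ^ (2:ℝ) ∂μt) = ∫⁻ s, P s ∂μt := by
      refine lintegral_congr fun s => ?_
      rw [← ENNReal.rpow_mul]
      norm_num
    have hsimp2 : (∫⁻ s, ((fun s => (W s / P s) ^ ((1:ℝ)/2)) s) ^ (2:ℝ) ∂μt)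
        = ∫⁻ s, W s / P s ∂μt := by
      refine lintegral_congr fun s => ?_
      rw [← ENNReal.rpow_mul]
      norm_num
    rw [hsimp1, hsimp2] at CS
    have hle1 : ∫⁻ s, ENNReal.ofReal |w s| ∂μt
        ≤ (∫⁻ s, P s ∂μt) ^ ((1:ℝ)/2) * (∫⁻ s, W s / P s ∂μt) ^ ((1:ℝ)/2) := by
      rw [lintegral_congr_ae key]
      exact CS
    have hv : |∫ s in Ioc 0 t, w s ∂mu01| ≤ ∫ s in Ioc 0 t, |w s| ∂mu01 := by
      simpa [Real.norm_eq_abs] using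
        norm_integral_le_integral_norm (μ := mu01.restrict (Ioc 0 t)) w
    calc ENNReal.ofReal ((∫ s in Ioc 0 t, w s ∂mu01) ^ 2)
        = ENNReal.ofReal |∫ s in Ioc 0 t, w s ∂mu01| ^ (2:ℕ) := by
          rw [← sq_abs, ENNReal.ofReal_pow (abs_nonneg _)]
      _ ≤ ENNReal.ofReal (∫ s in Ioc 0 t, |w s| ∂mu01) ^ (2:ℕ) := by
          exact pow_le_pow_left' (ENNReal.ofReal_le_ofReal hv) 2
      _ = (∫⁻ s, ENNReal.ofReal |w s| ∂μt) ^ (2:ℕ) := by rw [habs]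
      _ ≤ ((∫⁻ s, P s ∂μt) ^ ((1:ℝ)/2) * (∫⁻ s, W s / P s ∂μt) ^ ((1:ℝ)/2)) ^ (2:ℕ) :=
          pow_le_pow_left' hle1 2
      _ = (∫⁻ s, P s ∂μt) * (∫⁻ s, W s / P s ∂μt) := by
          rw [mul_pow, ← ENNReal.rpow_natCast ((∫⁻ s, P s ∂μt) ^ ((1:ℝ)/2)) 2,
            ← ENNReal.rpow_natCast ((∫⁻ s, W s / P s ∂μt) ^ ((1:ℝ)/2)) 2,
            ← ENNReal.rpow_mul, ← ENNReal.rpow_mul]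
          norm_num
  -- Step 2: the first factor
  have step2 : ∀ t ∈ Ioo (0:ℝ) 1, (∫⁻ s in Ioc 0 t, P s ∂mu01) = Q t := by
    intro t ht
    have hsub : Ioc (0:ℝ) t ⊆ Ioo (0:ℝ) 1 := fun s hs => ⟨hs.1, lt_of_le_of_lt hs.2 ht.2⟩
    rw [mu01_def, Measure.restrict_restrict measurableSet_Ioc, inter_eq_left.2 hsub]
    have hint : IntegrableOn (fun s => Real.cos (Real.pi / 2 * s)) (Ioc 0 t) volume := by
      exact ((Real.continuous_cos.comp (continuous_const.mul continuous_id)).integrableOn_Icc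
        (a := 0) (b := t)).mono_set Ioc_subset_Icc_self
    have hnn : 0 ≤ᵐ[volume.restrict (Ioc 0 t)] fun s => Real.cos (Real.pi / 2 * s) := by
      filter_upwards [ae_restrict_mem measurableSet_Ioc] with s hs
      exact (hcos_pos s hs.1 (lt_of_le_of_lt hs.2 ht.2)).le
    rw [hP, ← ofReal_integral_eq_lintegral_ofReal hint hnn]
    congr 1
    rw [← intervalIntegral.integral_of_le ht.1.le]
    rw [intervalIntegral.integral_comp_mul_left Real.cos (by positivity : Real.pi / 2 ≠ 0)]
    rw [integral_cos]
    have h0 : Real.pi / 2 * 0 = 0 := by ring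
    rw [h0, Real.sin_zero, smul_eq_mul]
    have hπ' : Real.pi ≠ 0 := hπ.ne'
    field_simp
    ring
  -- Step 3: pointwise bound by the kernel
  have step3 : ∀ t ∈ Ioo (0:ℝ) 1,
      ENNReal.ofReal ((∫ s in Ioc 0 t, w s ∂mu01) ^ 2) ≤ ∫⁻ s, K (t, s) ∂mu01 := by
    intro t ht
    refine le_trans (step1 t ht) ?_
    rw [step2 t ht]
    have hQt : Q t ≠ ∞ := ofReal_ne_top
    calc Q t * (∫⁻ s in Ioc 0 t, W s / P s ∂mu01)
        = Q t * ∫⁻ s, (Ioc 0 t).indicator (fun s => W s / P s) s ∂mu01 := by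
          rw [lintegral_indicator measurableSet_Ioc]
      _ = ∫⁻ s, Q t * (Ioc 0 t).indicator (fun s => W s / P s) s ∂mu01 := by
          rw [lintegral_const_mul' _ _ hQt]
      _ ≤ ∫⁻ s, K (t, s) ∂mu01 := by
          refine lintegral_mono fun s => ?_
          by_cases hs : s ∈ Ioc (0:ℝ) t
          · rw [indicator_of_mem hs]
            simp only [hK]
            rw [if_pos hs.2]
          · rw [indicator_of_notMem hs]
            simp
  -- Step 4: the inner integral after swapping
  have step4 : ∀ s ∈ Ioo (0:ℝ) 1,
      (∫⁻ t, K (t, s) ∂mu01) = ENNReal.ofReal (4 / Real.pi ^ 2) * W s := by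
    intro s hs
    have hc : 0 < Real.cos (Real.pi / 2 * s) := hcos_pos s hs.1 hs.2
    have hP0 : P s ≠ 0 := (ENNReal.ofReal_pos.2 hc).ne'
    have hPt : P s ≠ ∞ := ofReal_ne_top
    have hC_ne_top : W s / P s ≠ ∞ := (ENNReal.div_lt_top ofReal_ne_top hP0).ne
    have hfun : (fun t => K (t, s)) = (Ici s).indicator fun t => Q t * (W s / P s) := by
      funext t
      by_cases h : s ≤ t
      · rw [indicator_of_mem (mem_Ici.2 h)]
        simp only [hK]
        rw [if_pos h]
      · rw [indicator_of_notMem (fun hm => h (mem_Ici.1 hm))]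
        simp only [hK]
        rw [if_neg h]
    rw [hfun, lintegral_indicator measurableSet_Ici, lintegral_mul_const' _ _ hC_ne_top]
    have hrr : (mu01.restrict (Ici s)) = volume.restrict (Ico s 1) := by
      rw [mu01_def, Measure.restrict_restrict measurableSet_Ici]
      congr 1
      ext u
      simp only [mem_inter_iff, mem_Ici, mem_Ioo, mem_Ico]
      constructor
      · rintro ⟨h1, h2, h3⟩; exact ⟨h1, h3⟩
      · rintro ⟨h1, h2⟩; exact ⟨h1, lt_of_lt_of_le hs.1 h1, h2⟩
    rw [hrr]
    have hIco : volume.restrict (Ico s (1:ℝ)) = volume.restrict (Ioc s 1) := by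
      exact Measure.restrict_congr_set Ico_ae_eq_Ioc
    rw [hIco]
    have hint : IntegrableOn (fun t => 2 / Real.pi * Real.sin (Real.pi / 2 * t))
        (Ioc s 1) volume := by
      exact ((continuous_const.mul (Real.continuous_sin.comp
        (continuous_const.mul continuous_id))).integrableOn_Icc
        (a := s) (b := 1)).mono_set Ioc_subset_Icc_self
    have hnn : 0 ≤ᵐ[volume.restrict (Ioc s 1)] fun t => 2 / Real.pi * Real.sin (Real.pi / 2 * t) := by
      filter_upwards [ae_restrict_mem measurableSet_Ioc] with t ht
      have hπ2 : (0:ℝ) < Real.pi := Real.pi_pos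
      have h1 : 0 ≤ Real.sin (Real.pi / 2 * t) := by
        apply Real.sin_nonneg_of_nonneg_of_le_pi
        · have h0t : 0 < t := lt_trans hs.1 ht.1
          nlinarith
        · have h1t : t ≤ 1 := ht.2
          nlinarith
      positivity
    rw [hQ, ← ofReal_integral_eq_lintegral_ofReal hint hnn]
    have hcalc : (∫ t in Ioc s 1, 2 / Real.pi * Real.sin (Real.pi / 2 * t))
        = 4 / Real.pi ^ 2 * Real.cos (Real.pi / 2 * s) := by
      rw [← intervalIntegral.integral_of_le hs.2.le]
      rw [intervalIntegral.integral_const_mul]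
      rw [intervalIntegral.integral_comp_mul_left Real.sin (by positivity : Real.pi / 2 ≠ 0)]
      rw [integral_sin]
      have h1 : Real.pi / 2 * 1 = Real.pi / 2 := by ring
      rw [h1, Real.cos_pi_div_two, smul_eq_mul]
      field_simp
      ring
    rw [hcalc]
    have h4 : (0:ℝ) ≤ 4 / Real.pi ^ 2 := by positivity
    rw [ENNReal.ofReal_mul h4]
    rw [mul_assoc]
    congr 1
    exact ENNReal.mul_div_cancel hP0 hPt
  -- glue
  have hae : ∀ᵐ t ∂mu01, t ∈ Ioo (0:ℝ) 1 := by
    rw [mu01_def]; exact ae_restrict_mem measurableSet_Ioo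
  calc (∫⁻ t, ENNReal.ofReal ((∫ s in Ioc 0 t, w s ∂mu01) ^ 2) ∂mu01)
      ≤ ∫⁻ t, ∫⁻ s, K (t, s) ∂mu01 ∂mu01 := by
        refine lintegral_mono_ae ?_
        filter_upwards [hae] with t ht
        exact step3 t ht
    _ = ∫⁻ s, ∫⁻ t, K (t, s) ∂mu01 ∂mu01 := by
        exact lintegral_lintegral_swap (measK.aemeasurable)
    _ = ∫⁻ s, ENNReal.ofReal (4 / Real.pi ^ 2) * W s ∂mu01 := by
        refine lintegral_congr_ae ?_
        filter_upwards [hae] with s hs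
        exact step4 s hs
    _ = ENNReal.ofReal (4 / Real.pi ^ 2) * ∫⁻ s, W s ∂mu01 :=
        lintegral_const_mul' _ _ ofReal_ne_top

lemma norm_sq_eq_integral (w : E) :
    (∫ s, (w : ℝ → ℝ) s * (w : ℝ → ℝ) s ∂mu01) = ‖w‖ ^ 2 := by
  rw [integral_mul_eq_inner, real_inner_self_eq_norm_sq]

lemma poincare (w : E) : (∫ t, (U w t) ^ 2 ∂mu01) ≤ 4 / Real.pi ^ 2 * ‖w‖ ^ 2 := by
  have hπ : (0:ℝ) < Real.pi := Real.pi_pos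
  have hmeas := (Lp.memLp w).aestronglyMeasurable
  set f : ℝ → ℝ := hmeas.mk (w : ℝ → ℝ) with hf
  have hfm : Measurable f := hmeas.stronglyMeasurable_mk.measurable
  have hae : (w : ℝ → ℝ) =ᵐ[mu01] f := hmeas.ae_eq_mk
  have hfi : Integrable f mu01 := (integrable_of_E w).congr hae
  have hUeq : ∀ t, U w t = ∫ s in Ioc 0 t, f s ∂mu01 := fun t =>
    integral_congr_ae (ae_restrict_of_ae hae)
  have hkey := poincare_lintegral f hfm hfi
  have hInt : Integrable (fun t => (U w t) ^ 2) mu01 :=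
    integrable_of_continuous _ ((continuous_U w).pow 2)
  have l1 : ENNReal.ofReal (∫ t, (U w t) ^ 2 ∂mu01)
      = ∫⁻ t, ENNReal.ofReal ((∫ s in Ioc 0 t, f s ∂mu01) ^ 2) ∂mu01 := by
    rw [ofReal_integral_eq_lintegral_ofReal hInt (Filter.Eventually.of_forall fun t => sq_nonneg _)]
    refine lintegral_congr fun t => ?_
    rw [hUeq t]
  have hsq : Integrable (fun s => f s ^ 2) mu01 := by
    refine ((Lp.memLp w).integrable_sq).congr ?_
    filter_upwards [hae] with s hs
    rw [hs]
  have l2 : (∫⁻ s, ENNReal.ofReal (f s ^ 2) ∂mu01) = ENNReal.ofReal (∫ s, f s ^ 2 ∂mu01) :=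
    (ofReal_integral_eq_lintegral_ofReal hsq (Filter.Eventually.of_forall fun s => sq_nonneg _)).symm
  have l3 : (∫ s, f s ^ 2 ∂mu01) = ‖w‖ ^ 2 := by
    rw [← norm_sq_eq_integral w]
    refine integral_congr_ae ?_
    filter_upwards [hae] with s hs
    rw [hs, sq]
  have hfinal : ENNReal.ofReal (∫ t, (U w t) ^ 2 ∂mu01)
      ≤ ENNReal.ofReal (4 / Real.pi ^ 2 * ‖w‖ ^ 2) := by
    rw [l1]
    calc (∫⁻ t, ENNReal.ofReal ((∫ s in Ioc 0 t, f s ∂mu01) ^ 2) ∂mu01)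
        ≤ ENNReal.ofReal (4 / Real.pi ^ 2) * ∫⁻ s, ENNReal.ofReal (f s ^ 2) ∂mu01 := hkey
      _ = ENNReal.ofReal (4 / Real.pi ^ 2) * ENNReal.ofReal (‖w‖ ^ 2) := by rw [l2, l3]
      _ = ENNReal.ofReal (4 / Real.pi ^ 2 * ‖w‖ ^ 2) := by
          rw [ENNReal.ofReal_mul (by positivity)]
  have h1 : (0:ℝ) ≤ 4 / Real.pi ^ 2 * ‖w‖ ^ 2 := by positivity
  exact (ENNReal.ofReal_le_ofReal_iff h1).1 hfinal

end Poincare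

/-! ### The bilinear form and Lax–Milgram -/

section Bilinear

open scoped RealInnerProductSpace

variable (c : ℝ → ℝ) (hc : Continuous c) (M : ℝ) (hM : 0 ≤ M) (hbd : ∀ s, |c s| ≤ M)

lemma integrable_cUU (hc : Continuous c) (a b : E) :
    Integrable (fun s => c s * U a s * U b s) mu01 :=
  integrable_of_continuous _ (((hc.mul (continuous_U a)).mul (continuous_U b)))

lemma abs_int_cUU_le (hM : 0 ≤ M) (hbd : ∀ s, |c s| ≤ M) (a b : E) :
    |∫ s, c s * U a s * U b s ∂mu01| ≤ M * ‖a‖ * ‖b‖ := by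
  have h := norm_integral_le_of_norm_le_const (μ := mu01)
    (f := fun s => c s * U a s * U b s) (C := M * ‖a‖ * ‖b‖) ?_
  · simpa [Real.norm_eq_abs, measure_univ] using h
  · refine Filter.Eventually.of_forall fun s => ?_
    rw [Real.norm_eq_abs, abs_mul, abs_mul]
    have h1 : |c s| * |U a s| ≤ M * ‖a‖ :=
      mul_le_mul (hbd s) (U_abs_le a s) (abs_nonneg _) hM
    exact mul_le_mul h1 (U_abs_le b s) (abs_nonneg _) (by positivity)

noncomputable def Bfun (c : ℝ → ℝ) (a b : E) : ℝ :=
  (∫ s, (a : ℝ → ℝ) s * (b : ℝ → ℝ) s ∂mu01) - ∫ s, c s * U a s * U b s ∂mu01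

lemma Bfun_add_left (hc : Continuous c) (a a' b : E) :
    Bfun c (a + a') b = Bfun c a b + Bfun c a' b := by
  simp only [Bfun]
  have h1 : (∫ s, ((a + a' : E) : ℝ → ℝ) s * (b : ℝ → ℝ) s ∂mu01)
      = (∫ s, (a : ℝ → ℝ) s * (b : ℝ → ℝ) s ∂mu01)
        + ∫ s, (a' : ℝ → ℝ) s * (b : ℝ → ℝ) s ∂mu01 := by
    rw [integral_congr_ae ((Lp.coeFn_add a a').mono fun s hs => by
      rw [hs, Pi.add_apply, add_mul])]
    exact integral_add (integrable_mul_of_E a b) (integrable_mul_of_E a' b)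
  have h2 : (∫ s, c s * U (a + a') s * U b s ∂mu01)
      = (∫ s, c s * U a s * U b s ∂mu01) + ∫ s, c s * U a' s * U b s ∂mu01 := by
    have he : (fun s => c s * U (a + a') s * U b s)
        = fun s => c s * U a s * U b s + c s * U a' s * U b s := by
      funext s; rw [U_add]; ring
    rw [he]
    exact integral_add (integrable_cUU c hc a b) (integrable_cUU c hc a' b)
  rw [h1, h2]; ring

lemma Bfun_smul_left (hc : Continuous c) (r : ℝ) (a b : E) :
    Bfun c (r • a) b = r * Bfun c a b := by
  simp only [Bfun]
  have h1 : (∫ s, ((r • a : E) : ℝ → ℝ) s * (b : ℝ → ℝ) s ∂mu01)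
      = r * ∫ s, (a : ℝ → ℝ) s * (b : ℝ → ℝ) s ∂mu01 := by
    rw [integral_congr_ae ((Lp.coeFn_smul r a).mono fun s hs => by
      rw [hs, Pi.smul_apply, smul_eq_mul, mul_assoc])]
    exact integral_const_mul r _
  have h2 : (∫ s, c s * U (r • a) s * U b s ∂mu01)
      = r * ∫ s, c s * U a s * U b s ∂mu01 := by
    have he : (fun s => c s * U (r • a) s * U b s)
        = fun s => r * (c s * U a s * U b s) := by
      funext s; rw [U_smul]; ring
    rw [he]
    exact integral_const_mul r _
  rw [h1, h2]; ring

lemma Bfun_add_right (hc : Continuous c) (a b b' : E) :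
    Bfun c a (b + b') = Bfun c a b + Bfun c a b' := by
  simp only [Bfun]
  have h1 : (∫ s, (a : ℝ → ℝ) s * ((b + b' : E) : ℝ → ℝ) s ∂mu01)
      = (∫ s, (a : ℝ → ℝ) s * (b : ℝ → ℝ) s ∂mu01)
        + ∫ s, (a : ℝ → ℝ) s * (b' : ℝ → ℝ) s ∂mu01 := by
    rw [integral_congr_ae ((Lp.coeFn_add b b').mono fun s hs => by
      rw [hs, Pi.add_apply, mul_add])]
    exact integral_add (integrable_mul_of_E a b) (integrable_mul_of_E a b')
  have h2 : (∫ s, c s * U a s * U (b + b') s ∂mu01)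
      = (∫ s, c s * U a s * U b s ∂mu01) + ∫ s, c s * U a s * U b' s ∂mu01 := by
    have he : (fun s => c s * U a s * U (b + b') s)
        = fun s => c s * U a s * U b s + c s * U a s * U b' s := by
      funext s; rw [U_add]; ring
    rw [he]
    exact integral_add (integrable_cUU c hc a b) (integrable_cUU c hc a b')
  rw [h1, h2]; ring

lemma Bfun_smul_right (hc : Continuous c) (r : ℝ) (a b : E) :
    Bfun c a (r • b) = r * Bfun c a b := by
  simp only [Bfun]
  have h1 : (∫ s, (a : ℝ → ℝ) s * ((r • b : E) : ℝ → ℝ) s ∂mu01)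
      = r * ∫ s, (a : ℝ → ℝ) s * (b : ℝ → ℝ) s ∂mu01 := by
    have he : (fun s => (a : ℝ → ℝ) s * ((r • b : E) : ℝ → ℝ) s) =ᵐ[mu01]
        fun s => r * ((a : ℝ → ℝ) s * (b : ℝ → ℝ) s) := by
      filter_upwards [Lp.coeFn_smul r b] with s hs
      rw [hs, Pi.smul_apply, smul_eq_mul]; ring
    rw [integral_congr_ae he]
    exact integral_const_mul r _
  have h2 : (∫ s, c s * U a s * U (r • b) s ∂mu01)
      = r * ∫ s, c s * U a s * U b s ∂mu01 := by
    have he : (fun s => c s * U a s * U (r • b) s)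
        = fun s => r * (c s * U a s * U b s) := by
      funext s; rw [U_smul]; ring
    rw [he]
    exact integral_const_mul r _
  rw [h1, h2]; ring

lemma Bfun_bound (hc : Continuous c) (hM : 0 ≤ M) (hbd : ∀ s, |c s| ≤ M) (a b : E) :
    ‖Bfun c a b‖ ≤ (1 + M) * ‖a‖ * ‖b‖ := by
  simp only [Bfun]
  rw [Real.norm_eq_abs]
  have h1 : |∫ s, (a : ℝ → ℝ) s * (b : ℝ → ℝ) s ∂mu01| ≤ ‖a‖ * ‖b‖ := by
    rw [integral_mul_eq_inner]
    exact abs_real_inner_le_norm a b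
  have h2 := abs_int_cUU_le c M hM hbd a b
  calc |(∫ s, (a : ℝ → ℝ) s * (b : ℝ → ℝ) s ∂mu01) - ∫ s, c s * U a s * U b s ∂mu01|
      ≤ |∫ s, (a : ℝ → ℝ) s * (b : ℝ → ℝ) s ∂mu01| + |∫ s, c s * U a s * U b s ∂mu01| :=
        abs_sub _ _
    _ ≤ ‖a‖ * ‖b‖ + M * ‖a‖ * ‖b‖ := add_le_add h1 h2
    _ = (1 + M) * ‖a‖ * ‖b‖ := by ring

noncomputable def Bform (hc : Continuous c) (hM : 0 ≤ M) (hbd : ∀ s, |c s| ≤ M) :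
    E →L[ℝ] E →L[ℝ] ℝ :=
  LinearMap.mkContinuous₂
    (LinearMap.mk₂ ℝ (Bfun c) (Bfun_add_left c hc) (Bfun_smul_left c hc)
      (Bfun_add_right c hc) (Bfun_smul_right c hc))
    (1 + M) (fun a b => by simpa using Bfun_bound c M hc hM hbd a b)

lemma Bform_apply (hc : Continuous c) (hM : 0 ≤ M) (hbd : ∀ s, |c s| ≤ M) (a b : E) :
    Bform c M hc hM hbd a b
      = (∫ s, (a : ℝ → ℝ) s * (b : ℝ → ℝ) s ∂mu01) - ∫ s, c s * U a s * U b s ∂mu01 := rfl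

lemma Bform_coercive (hc : Continuous c) (hM : 0 ≤ M) (hbd : ∀ s, |c s| ≤ M)
    (hM2 : M < Real.pi ^ 2 / 4) : IsCoercive (Bform c M hc hM hbd) := by
  have hπ : (0:ℝ) < Real.pi := Real.pi_pos
  have hπ2 : (0:ℝ) < 4 / Real.pi ^ 2 := by positivity
  refine ⟨1 - M * (4 / Real.pi ^ 2), ?_, fun a => ?_⟩
  · have h1 : M * (4 / Real.pi ^ 2) < (Real.pi ^ 2 / 4) * (4 / Real.pi ^ 2) :=
      mul_lt_mul_of_pos_right hM2 hπ2
    have h4 : (Real.pi ^ 2 / 4) * (4 / Real.pi ^ 2) = 1 := by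
      field_simp
    linarith
  · rw [Bform_apply, norm_sq_eq_integral]
    have hpoin := poincare a
    have hUU : (∫ s, c s * U a s * U a s ∂mu01) ≤ M * ∫ s, (U a s) ^ 2 ∂mu01 := by
      rw [← integral_const_mul]
      refine integral_mono (integrable_cUU c hc a a)
        ((integrable_of_continuous _ ((continuous_U a).pow 2)).const_mul M)
        fun s => ?_
      have h1 : c s * U a s * U a s = c s * (U a s) ^ 2 := by ring
      rw [h1]
      exact mul_le_mul_of_nonneg_right ((le_abs_self _).trans (hbd s)) (sq_nonneg _)
    have hnn : (0:ℝ) ≤ ∫ s, (U a s) ^ 2 ∂mu01 :=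
      integral_nonneg fun s => sq_nonneg _
    have hMp : M * (∫ s, (U a s) ^ 2 ∂mu01) ≤ M * (4 / Real.pi ^ 2 * ‖a‖ ^ 2) :=
      mul_le_mul_of_nonneg_left hpoin hM
    nlinarith [sq_nonneg ‖a‖]

lemma exists_sol (hc : Continuous c) (hM : 0 ≤ M) (hbd : ∀ s, |c s| ≤ M)
    (hM2 : M < Real.pi ^ 2 / 4) (f : E →L[ℝ] ℝ) :
    ∃ a : E, ∀ u : E,
      (∫ s, (a : ℝ → ℝ) s * (u : ℝ → ℝ) s ∂mu01) - (∫ s, c s * U a s * U u s ∂mu01) = f u := by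
  have hcoer := Bform_coercive c M hc hM hbd hM2
  refine ⟨hcoer.continuousLinearEquivOfBilin.symm ((InnerProductSpace.toDual ℝ E).symm f),
    fun u => ?_⟩
  have h1 := hcoer.continuousLinearEquivOfBilin_apply
    (hcoer.continuousLinearEquivOfBilin.symm ((InnerProductSpace.toDual ℝ E).symm f)) u
  rw [ContinuousLinearEquiv.apply_symm_apply] at h1
  calc (∫ s, ((hcoer.continuousLinearEquivOfBilin.symm
          ((InnerProductSpace.toDual ℝ E).symm f) : E) : ℝ → ℝ) s * (u : ℝ → ℝ) s ∂mu01)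
        - ∫ s, c s * U (hcoer.continuousLinearEquivOfBilin.symm
            ((InnerProductSpace.toDual ℝ E).symm f)) s * U u s ∂mu01
      = Bform c M hc hM hbd
          (hcoer.continuousLinearEquivOfBilin.symm ((InnerProductSpace.toDual ℝ E).symm f)) u :=
        (Bform_apply c M hc hM hbd _ _).symm
    _ = (inner ℝ ((InnerProductSpace.toDual ℝ E).symm f) u : ℝ) := h1.symm
    _ = f u := InnerProductSpace.toDual_symm_apply

end Bilinear

/-! ### Assembly -/

noncomputable def singleCLM (n : ℕ) (i : Fin n) : E →L[ℝ] (Fin n → E) :=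
  { toLinearMap := LinearMap.single ℝ (fun _ => E) i
    cont := continuous_pi fun j => by
      show Continuous fun a : E => (Pi.single i a : Fin n → E) j
      rcases eq_or_ne j i with h | h
      · subst h
        have he : (fun a : E => (Pi.single j a : Fin n → E) j) = fun a : E => a := by
          funext a
          simp
        rw [he]
        exact continuous_id
      · have he : (fun a : E => (Pi.single i a : Fin n → E) j) = fun _ : E => (0 : E) := by
          funext a
          simp [Pi.single_eq_of_ne h]
        rw [he]
        exact continuous_const }

lemma edot_abs_le (p q : ℝ × ℝ) : |edot p q| ≤ enorm2 p * enorm2 q := by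
  rw [enorm2, enorm2, ← Real.sqrt_mul (by positivity)]
  apply Real.abs_le_sqrt
  rw [edot]
  nlinarith [sq_nonneg (p.1 * q.2 - p.2 * q.1)]

lemma enorm2_D2mvec (v : ℝ) : enorm2 (D2mvec v) = 1 := by
  rw [enorm2, D2mvec]
  simp only [neg_sq]
  rw [Real.cos_sq_add_sin_sq, Real.sqrt_one]

/-- Theorem `lagmul2` (ii): if `(h,α,ϑ)` is a minimizer of `C` in `𝓐`
and `max_i |hᵢ| < c_p⁻² = π²/4`, then `(h,α,ϑ)` is a regular point of `𝓐`:
the differential `DG(h,α,ϑ) : 𝓗 → (H^1_{0L}(I)ⁿ)'` is surjective. -/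
theorem minimizer_regular_point_small_field (n : ℕ) (ε γ : ℝ) (hε : 0 ≤ ε) (hγ : 0 ≤ γ)
    (tb : Fin n → ℝ → ℝ) (htb : ∀ i, MemLp (tb i) 2 mu01)
    (x : Hn n) (hadm : Admissible x)
    (hmin : ∀ y : Hn n, Admissible y → cost tb ε γ x ≤ cost tb ε γ y)
    (hsmall : ∀ i, enorm2 (x.1 i) < Real.pi ^ 2 / 4) :
    ∀ T : (Fin n → E) →L[ℝ] ℝ, ∃ y : Hn n, ∀ u : Fin n → E, dgFormula x y u = T u := by
  intro T
  classical
  set c : Fin n → ℝ → ℝ :=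
    fun i s => edot (x.1 i) (D2mvec (U x.2.1 s + U (x.2.2 i) s)) with hc
  have hccont : ∀ i, Continuous (c i) := by
    intro i
    have hg : Continuous fun s => U x.2.1 s + U (x.2.2 i) s :=
      (continuous_U x.2.1).add (continuous_U (x.2.2 i))
    simp only [hc, edot, D2mvec]
    exact (continuous_const.mul ((Real.continuous_cos.comp hg).neg)).add
      (continuous_const.mul ((Real.continuous_sin.comp hg).neg))
  have hbd : ∀ i s, |c i s| ≤ enorm2 (x.1 i) := by
    intro i s
    have := edot_abs_le (x.1 i) (D2mvec (U x.2.1 s + U (x.2.2 i) s))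
    rwa [enorm2_D2mvec, mul_one] at this
  have hMi : ∀ i, 0 ≤ enorm2 (x.1 i) := fun i => Real.sqrt_nonneg _
  choose ι hι using fun i =>
    exists_sol (c i) (enorm2 (x.1 i)) (hccont i) (hMi i) (hbd i) (hsmall i)
      (T.comp (singleCLM n i))
  refine ⟨⟨fun _ => (0 : ℝ × ℝ), (0 : E), ι⟩, fun u => ?_⟩
  rw [dgFormula]
  have hU0 : ∀ s : ℝ, U (0 : E) s = 0 := fun s => congrFun U_zero s
  have hfirst : ∀ i : Fin n,
      (-(∫ s, edot (0 : ℝ × ℝ) (Dmvec (U x.2.1 s + U (x.2.2 i) s)) * U (u i) s ∂mu01)) = 0 := by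
    intro i
    have hz : ∀ s : ℝ, edot (0 : ℝ × ℝ) (Dmvec (U x.2.1 s + U (x.2.2 i) s)) * U (u i) s = 0 := by
      intro s; rw [edot]; simp
    simp [hz]
  have hsecond : ∀ i : Fin n,
      ((∫ s, (ι i : ℝ → ℝ) s * (u i : ℝ → ℝ) s ∂mu01)
        - ∫ s, edot (x.1 i) (D2mvec (U x.2.1 s + U (x.2.2 i) s))
            * (U (ι i) s + U (0:E) s) * U (u i) s ∂mu01)
      = T (Pi.single i (u i)) := by
    intro i
    have heq : (fun s => edot (x.1 i) (D2mvec (U x.2.1 s + U (x.2.2 i) s))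
          * (U (ι i) s + U (0:E) s) * U (u i) s)
        = fun s => c i s * U (ι i) s * U (u i) s := by
      funext s
      rw [hU0, add_zero]
    rw [heq]
    exact hι i (u i)
  calc (∑ i, (-(∫ s, edot ((fun _ => (0 : ℝ × ℝ)) i) (Dmvec (U x.2.1 s + U (x.2.2 i) s))
          * U (u i) s ∂mu01)))
      + ∑ i, ((∫ s, (ι i : ℝ → ℝ) s * (u i : ℝ → ℝ) s ∂mu01)
        - ∫ s, edot (x.1 i) (D2mvec (U x.2.1 s + U (x.2.2 i) s))
            * (U (ι i) s + U (0:E) s) * U (u i) s ∂mu01)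
      = 0 + ∑ i, T (Pi.single i (u i)) := by
        rw [Finset.sum_congr rfl fun i _ => hfirst i, Finset.sum_congr rfl fun i _ => hsecond i]
        simp
    _ = T u := by
        rw [zero_add, ← map_sum, Finset.univ_sum_single]
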